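/- Fix q ≥ 2. For every weight w ≥ 1, the number of tuples (s_1,…,s_n) of positive integers of weight w with q ∤ s_i for all i equals d(w), where d(0)=1, d(w)=2^{w−1} for 1 ≤ w ≤ q−1, d(q)=2^{q−1}−1, and d(w) = ∑_{i=1}^{q} d(w−i) for w > q. -/

import Mathlib

open Finset

def fset (q : ℕ) : ℕ → Finset (List ℕ)
  | 0 => {[]}
  | (w+1) => (((Finset.Icc 1 (w+1)).filter (fun k => ¬ q ∣ k)).attach).biUnion
      (fun k => (fset q (w+1-k.1)).image (List.cons k.1))
  decreasing_by
    have h := (Finset.mem_Icc.mp (Finset.mem_filter.mp k.2).1).1; omega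

lemma mem_fset (q : ℕ) : ∀ w l, l ∈ fset q w ↔
    ((∀ x ∈ l, 0 < x) ∧ l.sum = w ∧ ∀ x ∈ l, ¬ q ∣ x) := by
  intro w
  induction w using Nat.strong_induction_on with
  | _ w ih =>
    match w with
    | 0 =>
      intro l
      simp only [fset, Finset.mem_singleton]
      constructor
      · rintro rfl; simp
      · rintro ⟨h1, h2, h3⟩
        cases l with
        | nil => rfl
        | cons a t =>
          have := h1 a (by simp)
          simp only [List.sum_cons] at h2
          omega
    | (v+1) =>
      intro l
      rw [fset]
      simp only [Finset.mem_biUnion, Finset.mem_attach, true_and, Subtype.exists,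
        Finset.mem_image, Finset.mem_filter, Finset.mem_Icc]
      constructor
      · rintro ⟨k, ⟨⟨hk1, hk2⟩, hkd⟩, t, ht, rfl⟩
        rw [ih (v+1-k) (by omega)] at ht
        obtain ⟨htp, hts, htd⟩ := ht
        refine ⟨?_, ?_, ?_⟩
        · intro x hx
          rcases List.mem_cons.mp hx with rfl | hx
          · omega
          · exact htp x hx
        · simp only [List.sum_cons, hts]; omega
        · intro x hx
          rcases List.mem_cons.mp hx with rfl | hx
          · exact hkd
          · exact htd x hx
      · rintro ⟨hp, hs, hd⟩
        cases l with
        | nil => simp at hs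
        | cons a t =>
          have ha : 0 < a := hp a (by simp)
          simp only [List.sum_cons] at hs
          refine ⟨a, ⟨⟨ha, by omega⟩, hd a (by simp)⟩, t, ?_, rfl⟩
          rw [ih (v+1-a) (by omega)]
          exact ⟨fun x hx => hp x (by simp [hx]), by omega,
            fun x hx => hd x (by simp [hx])⟩

lemma fset_succ_eq (q v : ℕ) : fset q (v+1)
    = (((Finset.Icc 1 (v+1)).filter (fun k => ¬ q ∣ k)).attach).biUnion
      (fun k => (fset q (v+1-k.1)).image (List.cons k.1)) := by
  conv_lhs => rw [fset]

lemma card_fset_succ (q v : ℕ) : (fset q (v+1)).card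
    = ∑ k ∈ (Finset.Icc 1 (v+1)).filter (fun k => ¬ q ∣ k), (fset q (v+1-k)).card := by
  rw [fset_succ_eq, Finset.card_biUnion]
  · rw [← Finset.sum_attach ((Finset.Icc 1 (v+1)).filter (fun k => ¬ q ∣ k))
      (fun k => (fset q (v+1-k)).card)]
    exact Finset.sum_congr rfl fun k _ =>
      Finset.card_image_of_injective _ (List.cons_injective)
  · intro a _ b _ hab
    rw [Function.onFun, Finset.disjoint_left]
    intro l hl hl'
    obtain ⟨t, ht, rfl⟩ := Finset.mem_image.mp hl
    obtain ⟨t', ht', heq⟩ := Finset.mem_image.mp hl'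
    exact hab (Subtype.ext (List.cons.injEq _ _ _ _ ▸ heq).1.symm)

lemma two_pow_sum (n : ℕ) : ∑ i ∈ Finset.range n, 2^i = 2^n - 1 := by
  induction n with
  | zero => simp
  | succ n ih =>
    rw [Finset.sum_range_succ, ih]
    have h1 : 2^(n+1) = 2^n + 2^n := by ring
    have h2 : 1 ≤ 2^n := Nat.one_le_two_pow
    omega

lemma sum_Icc_to_range (f : ℕ → ℕ) (a b : ℕ) :
    ∑ k ∈ Finset.Icc a b, f k = ∑ i ∈ Finset.range (b+1-a), f (a+i) := by
  rw [← Finset.Ico_add_one_right_eq_Icc, Finset.sum_Ico_eq_sum_range]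

section
variable (q : ℕ) (hq : 2 ≤ q) (c : ℕ → ℕ) (hc0 : c 0 = 1)
  (hcrec : ∀ v, c (v+1) = ∑ k ∈ (Finset.Icc 1 (v+1)).filter (fun k => ¬ q ∣ k), c (v+1-k))

include hq hc0 hcrec

lemma csmall : ∀ w, 1 ≤ w → w < q → c w = 2^(w-1) := by
  intro w
  induction w using Nat.strong_induction_on with
  | _ w ih =>
    match w with
    | 0 => omega
    | (v+1) =>
      intro _ hwq
      rw [hcrec v, Finset.filter_true_of_mem (fun k hk => by
        rw [Finset.mem_Icc] at hk
        intro hd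
        have := Nat.le_of_dvd (by omega) hd
        omega)]
      rw [sum_Icc_to_range]
      have h1 : ∀ i ∈ Finset.range (v+1+1-1), c (v+1-(1+i)) = c (v+1-1-i) := by
        intro i _; congr 1; omega
      rw [Finset.sum_congr rfl h1]
      have h2 : (v+1+1-1) = v + 1 := by omega
      rw [h2, Finset.sum_range_reflect c (v+1), Finset.sum_range_succ']
      have h4 : ∀ i ∈ Finset.range v, c (i+1) = 2^i := by
        intro i hi
        rw [Finset.mem_range] at hi
        rw [ih (i+1) (by omega) (by omega) (by omega)]
        simp
      rw [Finset.sum_congr rfl h4, hc0, two_pow_sum]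
      have : 1 ≤ 2^v := Nat.one_le_two_pow
      simp only [Nat.add_sub_cancel]
      omega

lemma catq : c q = 2^(q-1) - 1 := by
  obtain ⟨u, rfl⟩ : ∃ u, q = u + 1 := ⟨q - 1, by omega⟩
  rw [hcrec u]
  have hset : (Finset.Icc 1 (u+1)).filter (fun k => ¬ (u+1) ∣ k) = Finset.Icc 1 u := by
    ext k
    simp only [Finset.mem_filter, Finset.mem_Icc]
    constructor
    · rintro ⟨⟨h1, h2⟩, hd⟩
      refine ⟨h1, ?_⟩
      by_contra h
      have : k = u + 1 := by omega
      exact hd (this ▸ dvd_refl _)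
    · rintro ⟨h1, h2⟩
      refine ⟨⟨h1, by omega⟩, fun hd => ?_⟩
      have := Nat.le_of_dvd (by omega) hd
      omega
  rw [hset, sum_Icc_to_range]
  have h1 : ∀ i ∈ Finset.range (u+1-1), c (u+1-(1+i)) = (fun j => c (j+1)) (u-1-i) := by
    intro i hi
    rw [Finset.mem_range] at hi
    simp only; congr 1; omega
  rw [Finset.sum_congr rfl h1]
  have h2 : u+1-1 = u := by omega
  rw [h2, Finset.sum_range_reflect (fun i => c (i+1)) u]
  have h4 : ∀ i ∈ Finset.range u, c (i+1) = 2^i := by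
    intro i hi
    rw [Finset.mem_range] at hi
    rw [csmall (u+1) hq c hc0 hcrec (i+1) (by omega) (by omega)]
    simp
  rw [Finset.sum_congr rfl h4, two_pow_sum]

lemma cbig : ∀ w, q < w → c w = ∑ i ∈ Finset.Icc 1 q, c (w - i) := by
  intro w hw
  obtain ⟨v, hv⟩ : ∃ v, w = v + 1 := ⟨w - 1, by omega⟩
  rw [hv, hcrec v, ← hv, Finset.sum_filter]
  have hsplit : ∑ k ∈ Finset.Icc 1 w, (if ¬ q ∣ k then c (w-k) else 0)
      = ∑ k ∈ Finset.Icc 1 q, (if ¬ q ∣ k then c (w-k) else 0)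
      + ∑ k ∈ Finset.Icc (q+1) w, (if ¬ q ∣ k then c (w-k) else 0) := by
    rw [← Finset.Ico_add_one_right_eq_Icc 1 w, ← Finset.Ico_add_one_right_eq_Icc 1 q, ← Finset.Ico_add_one_right_eq_Icc (q+1) w]
    exact (Finset.sum_Ico_consecutive _ (by omega) (by omega)).symm
  rw [hsplit]
  -- second sum equals c (w - q)
  have hB : ∑ k ∈ Finset.Icc (q+1) w, (if ¬ q ∣ k then c (w-k) else 0) = c (w - q) := by
    rw [sum_Icc_to_range]
    have h1 : ∀ i ∈ Finset.range (w+1-(q+1)), (if ¬ q ∣ (q+1+i) then c (w-(q+1+i)) else 0)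
        = (if ¬ q ∣ (1+i) then c ((w-q)-(1+i)) else 0) := by
      intro i _
      have hdv : q ∣ (q+1+i) ↔ q ∣ (1+i) := by
        have he : q + 1 + i = q + (1 + i) := by ring
        rw [he, Nat.dvd_add_right (dvd_refl q)]
      have harg : w-(q+1+i) = (w-q)-(1+i) := by omega
      rw [harg]
      by_cases hd : q ∣ (1+i)
      · rw [if_neg (by simp [hdv, hd]), if_neg (by simp [hd])]
      · rw [if_pos (by rwa [hdv]), if_pos hd]
    rw [Finset.sum_congr rfl h1]
    obtain ⟨u, hu⟩ : ∃ u, w - q = u + 1 := ⟨w - q - 1, by omega⟩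
    have h2 : w + 1 - (q+1) = u + 1 + 1 - 1 := by omega
    rw [h2]
    have h3 : ∀ i ∈ Finset.range (u+1+1-1), (if ¬ q ∣ (1+i) then c ((w-q)-(1+i)) else 0)
        = (if ¬ q ∣ (1+i) then c ((u+1)-(1+i)) else 0) := by
      intro i _; rw [hu]
    rw [Finset.sum_congr rfl h3,
      ← sum_Icc_to_range (fun k => if ¬ q ∣ k then c ((u+1)-k) else 0) 1 (u+1),
      ← Finset.sum_filter, ← hcrec u, hu]
  rw [hB]
  -- first sum plus c (w-q) equals the Icc 1 q sum
  obtain ⟨p, hp⟩ : ∃ p, q = p + 1 := ⟨q - 1, by omega⟩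
  subst hp
  rw [Finset.sum_Icc_succ_top (by omega : 1 ≤ p + 1),
    Finset.sum_Icc_succ_top (by omega : 1 ≤ p + 1)]
  rw [if_neg (by simp)]
  have h5 : ∀ k ∈ Finset.Icc 1 p, (if ¬ (p+1) ∣ k then c (w-k) else 0) = c (w-k) := by
    intro k hk
    rw [Finset.mem_Icc] at hk
    rw [if_pos]
    intro hd
    have := Nat.le_of_dvd (by omega) hd
    omega
  rw [Finset.sum_congr rfl h5]
  omega

end

/-- Fix `q ≥ 2` and let `d : ℕ → ℕ` satisfy `d 0 = 1`, `d w = 2^(w-1)` for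
`1 ≤ w ≤ q-1`, `d q = 2^(q-1) - 1`, and `d w = ∑_{i=1}^q d (w-i)` for `w > q`.
Then for every `w ≥ 1`, the number of tuples `(s_1, …, s_n)` of positive
integers of weight `w` with `q ∤ s_i` for all `i` equals `d w`. -/
theorem stmt17 (q : ℕ) (hq : 2 ≤ q) (d : ℕ → ℕ)
    (hd0 : d 0 = 1)
    (hd1 : ∀ w, 1 ≤ w → w ≤ q - 1 → d w = 2 ^ (w - 1))
    (hdq : d q = 2 ^ (q - 1) - 1)
    (hdrec : ∀ w, q < w → d w = ∑ i ∈ Finset.Icc 1 q, d (w - i)) :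
    ∀ w, 1 ≤ w →
      {l : List ℕ | l ≠ [] ∧ (∀ x ∈ l, 0 < x) ∧ l.sum = w ∧
        ∀ x ∈ l, ¬ q ∣ x}.ncard = d w := by
  set c : ℕ → ℕ := fun w => (fset q w).card with hc
  have hc0 : c 0 = 1 := by simp [hc, fset]
  have hcrec : ∀ v, c (v+1)
      = ∑ k ∈ (Finset.Icc 1 (v+1)).filter (fun k => ¬ q ∣ k), c (v+1-k) :=
    card_fset_succ q
  have key : ∀ w, 1 ≤ w → c w = d w := by
    intro w
    induction w using Nat.strong_induction_on with
    | _ w ih =>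
      intro hw
      rcases lt_trichotomy w q with h | h | h
      · rw [csmall q hq c hc0 hcrec w hw h, hd1 w hw (by omega)]
      · rw [h, catq q hq c hc0 hcrec, hdq]
      · rw [cbig q hq c hc0 hcrec w h, hdrec w h]
        exact Finset.sum_congr rfl fun i hi => by
          rw [Finset.mem_Icc] at hi
          exact ih (w - i) (by omega) (by omega)
  intro w hw
  have hset : {l : List ℕ | l ≠ [] ∧ (∀ x ∈ l, 0 < x) ∧ l.sum = w ∧
      ∀ x ∈ l, ¬ q ∣ x} = ↑(fset q w) := by
    ext l
    simp only [Set.mem_setOf_eq, Finset.mem_coe, mem_fset]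
    constructor
    · rintro ⟨_, h⟩; exact h
    · rintro ⟨h1, h2, h3⟩
      refine ⟨?_, h1, h2, h3⟩
      rintro rfl
      simp at h2
      omega
  rw [hset, Set.ncard_coe_finset]
  exact key w hw
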